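/- Let (H, G) be a bounded Hilbert algebra with a Gabbay function. Then on the implicative semilattice L(H) of finite intersections of sets φ(a), the extension G^π satisfies G^π(U) = U ∪ (¬¬U ∩ (U^c)_M) for every U ∈ L(H), and G^π is a Gabbay function on L(H): G^π(U) ⊆ ¬¬U and G^π(U) ⇒ U ⊆ ¬¬U ⇒ U. -/

import Mathlib

namespace FH

variable {H : Type*}

/-- Hilbert algebra axioms for `(imp, one)`. -/
def IsHilbert (imp : H → H → H) (one : H) : Prop :=
  (∀ a b : H, imp a (imp b a) = one) ∧
  (∀ a b c : H, imp (imp a (imp b c)) (imp (imp a b) (imp a c)) = one) ∧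
  (∀ a b : H, imp a b = one → imp b a = one → a = b)

/-- The natural order of a Hilbert algebra. -/
def hle (imp : H → H → H) (one : H) (a b : H) : Prop := imp a b = one

/-- Implicative filter. -/
def IsImpFilter (imp : H → H → H) (one : H) (F : Set H) : Prop :=
  one ∈ F ∧ ∀ a b : H, a ∈ F → imp a b ∈ F → b ∈ F

/-- Irreducible implicative filter. -/
def IsIrr (imp : H → H → H) (one : H) (F : Set H) : Prop :=
  IsImpFilter imp one F ∧ F ≠ Set.univ ∧
    ∀ F1 F2 : Set H, IsImpFilter imp one F1 → IsImpFilter imp one F2 →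
      F = F1 ∩ F2 → (F = F1 ∨ F = F2)

/-- `φ(a) = {P ∈ X(H) : a ∈ P}`. -/
def phi (imp : H → H → H) (one : H) (a : H) : Set (Set H) :=
  {P | IsIrr imp one P ∧ a ∈ P}

/-- `X(H)`, the set of irreducible implicative filters. -/
def XH (imp : H → H → H) (one : H) : Set (Set H) := {P | IsIrr imp one P}

/-- Upsets of the poset `(X(H), ⊆)`. -/
def IsUp (imp : H → H → H) (one : H) (U : Set (Set H)) : Prop :=
  (∀ P ∈ U, IsIrr imp one P) ∧
    ∀ P Q : Set H, P ∈ U → IsIrr imp one Q → P ⊆ Q → Q ∈ U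

/-- Heyting implication `U ⇒ V` on upsets of `X(H)` (the complement relative to
`X(H)` of the downset generated by `U ∩ Vᶜ`). -/
def himp (imp : H → H → H) (one : H) (U V : Set (Set H)) : Set (Set H) :=
  {P | IsIrr imp one P ∧ ∀ Q : Set H, IsIrr imp one Q → P ⊆ Q → Q ∈ U → Q ∈ V}

/-- Frontal operator on a Hilbert algebra. -/
def IsFrontal (imp : H → H → H) (one : H) (t : H → H) : Prop :=
  (∀ a b : H, hle imp one (t (imp a b)) (imp (t a) (t b))) ∧
  (∀ a : H, hle imp one a (t a)) ∧
  (∀ a b : H, hle imp one (t a) (imp (imp (imp b a) b) b))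

/-- The elements of `⟨φ[H]⟩`: finite (nonempty) intersections `φ(a₁) ∩ ⋯ ∩ φ(aₙ)`. -/
def gen (imp : H → H → H) (one : H) (U : Set (Set H)) : Prop :=
  ∃ l : List H, l ≠ [] ∧ U = {P | IsIrr imp one P ∧ ∀ a ∈ l, a ∈ P}

/-- The π-extension `τ^π` of a unary map `t` to the upsets of `X(H)`. -/
def tpi (imp : H → H → H) (one : H) (t : H → H) (U : Set (Set H)) : Set (Set H) :=
  {P | IsIrr imp one P ∧ ∀ Q : Set H, IsIrr imp one Q → t ⁻¹' P ⊆ Q → Q ∈ U}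

/-- Maximal elements (w.r.t. inclusion) of a family of sets. -/
def Mx (S : Set (Set H)) : Set (Set H) := {P ∈ S | ∀ Q ∈ S, P ⊆ Q → P = Q}

/-- Relative complement in `X(H)`. -/
def Xc (imp : H → H → H) (one : H) (U : Set (Set H)) : Set (Set H) :=
  {P | IsIrr imp one P ∧ P ∉ U}

/-- Downset (within `X(H)`) generated by a family `S`. -/
def dn (imp : H → H → H) (one : H) (S : Set (Set H)) : Set (Set H) :=
  {P | IsIrr imp one P ∧ ∃ Q ∈ S, P ⊆ Q}

/-- Implicative semilattice axioms for `(inf, imp, one)`. -/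
def IsImpSL (inf : H → H → H) (imp : H → H → H) (one : H) : Prop :=
  (∀ a b : H, inf a b = inf b a) ∧
  (∀ a b c : H, inf (inf a b) c = inf a (inf b c)) ∧
  (∀ a : H, inf a a = a) ∧
  (∀ a : H, inf a one = a) ∧
  (∀ a b c : H, inf (inf a b) c = inf a b ↔ inf a (imp b c) = a)

/-- The semilattice order: `a ≤ b` iff `a ∧ b = a`. -/
def sle (inf : H → H → H) (a b : H) : Prop := inf a b = a

end FH


namespace Stmt19Aux

variable {H : Type*}

def IsH (imp : H → H → H) (one : H) : Prop :=
  (∀ a b : H, imp a (imp b a) = one) ∧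
  (∀ a b c : H, imp (imp a (imp b c)) (imp (imp a b) (imp a c)) = one) ∧
  (∀ a b : H, imp a b = one → imp b a = one → a = b)

variable {imp : H → H → H} {one : H}

theorem mp (hH : IsH imp one) {a b : H} (h1 : imp a b = one) (h2 : a = one) :
    b = one := by
  subst h2
  have k := hH.1 b a
  rw [h1] at k
  exact (hH.2.2 a b h1 k).symm

theorem hid (hH : IsH imp one) (a : H) : imp a a = one := by
  have s := hH.2.1 a (imp one a) a
  have k1 := hH.1 a (imp one a)
  have step := mp hH s k1
  exact mp hH step (hH.1 a one)

theorem htop (hH : IsH imp one) (a : H) : imp a one = one := by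
  have k := hH.1 a a
  rw [← hid hH a] at k ⊢
  exact k

theorem one_imp (hH : IsH imp one) (a : H) : imp one a = a := by
  have h2 : imp (imp one a) a = one := by
    have s := hH.2.1 (imp one a) one a
    have := mp hH s (hid hH (imp one a))
    exact mp hH this (htop hH (imp one a))
  exact hH.2.2 (imp one a) a h2 (hH.1 a one)

theorem le_trans (hH : IsH imp one) {a b c : H} (h1 : imp a b = one)
    (h2 : imp b c = one) : imp a c = one := by
  have s := hH.2.1 a b c
  have h3 : imp a (imp b c) = one := by rw [h2]; exact htop hH a
  exact mp hH (mp hH s h3) h1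

theorem s_rule (hH : IsH imp one) {a b c : H} (h : imp a (imp b c) = one) :
    imp (imp a b) (imp a c) = one := mp hH (hH.2.1 a b c) h

theorem mono_right (hH : IsH imp one) {x y : H} (z : H) (h : imp x y = one) :
    imp (imp z x) (imp z y) = one := by
  apply s_rule hH
  rw [h]; exact htop hH z

theorem c_rule (hH : IsH imp one) {a b c : H} (h : imp a (imp b c) = one) :
    imp b (imp a c) = one :=
  le_trans hH (hH.1 b a) (s_rule hH h)

theorem pe (hH : IsH imp one) (a b : H) : imp a (imp (imp a b) b) = one :=
  c_rule hH (hid hH (imp a b))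

theorem bthm (hH : IsH imp one) (a b c : H) :
    imp (imp b c) (imp (imp a b) (imp a c)) = one :=
  le_trans hH (hH.1 (imp b c) a) (hH.2.1 a b c)

theorem bthm' (hH : IsH imp one) (a b c : H) :
    imp (imp a b) (imp (imp b c) (imp a c)) = one :=
  c_rule hH (bthm hH a b c)

theorem mono_left (hH : IsH imp one) {z x : H} (y : H) (h : imp z x = one) :
    imp (imp x y) (imp z y) = one :=
  mp hH (bthm' hH z x y) h

/-- `¬¬(a→b) ≤ ¬¬a → ¬¬b`. -/
theorem dn_imp (hH : IsH imp one) (zero a b : H) :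
    imp (imp (imp (imp a b) zero) zero)
      (imp (imp (imp a zero) zero) (imp (imp b zero) zero)) = one := by
  set q := imp a b with hq
  have L1 : imp (imp b zero) (imp q (imp a zero)) = one := bthm hH a b zero
  have L2 : imp (imp b zero) (imp (imp (imp a zero) zero) (imp q zero)) = one :=
    le_trans hH L1 (bthm' hH q (imp a zero) zero)
  have L3 := c_rule hH L2
  have L4 := bthm' hH (imp b zero) (imp q zero) zero
  have L5 := le_trans hH L3 L4
  exact c_rule hH L5

/-- `(b→c) → (((b→a)→c) → ((c→a)→c))`. -/
theorem tthm (hH : IsH imp one) (a b c : H) :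
    imp (imp b c) (imp (imp (imp b a) c) (imp (imp c a) c)) = one :=
  le_trans hH (bthm' hH b c a) (bthm' hH (imp c a) (imp b a) c)


/-! ### Filters -/

def IsF (imp : H → H → H) (one : H) (F : Set H) : Prop :=
  one ∈ F ∧ ∀ a b : H, a ∈ F → imp a b ∈ F → b ∈ F

theorem thm_mem {F : Set H} (hF : IsF imp one F) {x : H} (h : x = one) : x ∈ F :=
  h ▸ hF.1

theorem mem_of_le {F : Set H} (hF : IsF imp one F) {a b : H} (ha : a ∈ F)
    (h : imp a b = one) : b ∈ F :=
  hF.2 a b ha (thm_mem hF h)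

/-- Generated filter over a filter `Q` and a finite list `l`. -/
def gf (imp : H → H → H) (Q : Set H) (l : List H) : Set H :=
  {b | List.foldr imp b l ∈ Q}

theorem foldr_one (hH : IsH imp one) (l : List H) :
    List.foldr imp one l = one := by
  induction l with
  | nil => rfl
  | cons h t ih => simp only [List.foldr_cons, ih, htop hH]

theorem le_foldr (hH : IsH imp one) (l : List H) (b : H) :
    imp b (List.foldr imp b l) = one := by
  induction l with
  | nil => exact hid hH b
  | cons h t ih => exact le_trans hH ih (hH.1 (List.foldr imp b t) h)

theorem foldr_imp_le (hH : IsH imp one) (l : List H) (a b : H) :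
    imp (List.foldr imp (imp a b) l)
      (imp (List.foldr imp a l) (List.foldr imp b l)) = one := by
  induction l with
  | nil => exact hid hH (imp a b)
  | cons h t ih =>
      exact le_trans hH (mono_right hH h ih)
        (hH.2.1 h (List.foldr imp a t) (List.foldr imp b t))

theorem foldr_mem (hH : IsH imp one) {l : List H} {a : H} (ha : a ∈ l) :
    List.foldr imp a l = one := by
  induction l with
  | nil => cases ha
  | cons h t ih =>
      rcases List.mem_cons.mp ha with rfl | hmem
      · exact le_foldr hH t a
      · simp only [List.foldr_cons, ih hmem, htop hH]

theorem gf_filter (hH : IsH imp one) {Q : Set H} (hQ : IsF imp one Q)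
    (l : List H) : IsF imp one (gf imp Q l) := by
  constructor
  · show List.foldr imp one l ∈ Q
    rw [foldr_one hH]; exact hQ.1
  · intro a b ha hab
    exact hQ.2 _ _ ha (mem_of_le hQ hab (foldr_imp_le hH l a b))

theorem subset_gf (hH : IsH imp one) {Q : Set H} (hQ : IsF imp one Q)
    (l : List H) : Q ⊆ gf imp Q l := fun b hb =>
  mem_of_le hQ hb (le_foldr hH l b)

theorem mem_gf_of_mem (hH : IsH imp one) {Q : Set H} (hQ : IsF imp one Q)
    {l : List H} {a : H} (ha : a ∈ l) : a ∈ gf imp Q l :=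
  thm_mem hQ (foldr_mem hH ha)

theorem eq_univ_of_zero_mem {zero : H} (hbot : ∀ a : H, imp zero a = one)
    {F : Set H} (hF : IsF imp one F) (hz : zero ∈ F) : F = Set.univ :=
  Set.eq_univ_of_forall fun a => mem_of_le hF hz (hbot a)

/-! ### Separation via Zorn -/

def Irr (imp : H → H → H) (one : H) (F : Set H) : Prop :=
  IsF imp one F ∧ F ≠ Set.univ ∧
    ∀ F1 F2 : Set H, IsF imp one F1 → IsF imp one F2 →
      F = F1 ∩ F2 → (F = F1 ∨ F = F2)

theorem sUnion_chain_filter (hH : IsH imp one) {c : Set (Set H)}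
    (hc : IsChain (· ⊆ ·) c) (hne : c.Nonempty) (hall : ∀ G ∈ c, IsF imp one G) :
    IsF imp one (⋃₀ c) := by
  constructor
  · obtain ⟨G, hG⟩ := hne
    exact ⟨G, hG, (hall G hG).1⟩
  · rintro a b ⟨G1, hG1, ha⟩ ⟨G2, hG2, hab⟩
    rcases hc.total hG1 hG2 with h | h
    · exact ⟨G2, hG2, (hall G2 hG2).2 a b (h ha) hab⟩
    · exact ⟨G1, hG1, (hall G1 hG1).2 a b ha (h hab)⟩

theorem separation (hH : IsH imp one) {F : Set H} (hF : IsF imp one F) {c : H}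
    (hc : c ∉ F) : ∃ P : Set H, Irr imp one P ∧ F ⊆ P ∧ c ∉ P := by
  set S : Set (Set H) := {G | IsF imp one G ∧ F ⊆ G ∧ c ∉ G} with hS
  have Hub : ∀ ch ⊆ S, IsChain (· ⊆ ·) ch → ch.Nonempty →
      ∃ ub ∈ S, ∀ s ∈ ch, s ⊆ ub := by
    intro ch hch hchain hne
    refine ⟨⋃₀ ch, ⟨sUnion_chain_filter hH hchain hne fun G hG => (hch hG).1, ?_, ?_⟩,
      fun s hs => Set.subset_sUnion_of_mem hs⟩
    · obtain ⟨G, hG⟩ := hne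
      exact ((hch hG).2.1).trans (Set.subset_sUnion_of_mem hG)
    · rintro ⟨G, hG, hcG⟩
      exact (hch hG).2.2 hcG
  obtain ⟨M, hFM, hM⟩ := zorn_subset_nonempty S Hub F ⟨hF, subset_rfl, hc⟩
  obtain ⟨hMf, hFM', hcM⟩ := hM.prop
  refine ⟨M, ⟨hMf, ?_, ?_⟩, hFM, hcM⟩
  · intro h; exact hcM (h ▸ Set.mem_univ c)
  · intro F1 F2 h1 h2 heq
    by_contra hcon
    push_neg at hcon
    obtain ⟨hne1, hne2⟩ := hcon
    have hsub1 : M ⊆ F1 := heq ▸ Set.inter_subset_left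
    have hsub2 : M ⊆ F2 := heq ▸ Set.inter_subset_right
    obtain ⟨x, hx1, hxM⟩ : ∃ x, x ∈ F1 ∧ x ∉ M := by
      by_contra h; push_neg at h
      exact hne1 (Set.Subset.antisymm hsub1 h)
    obtain ⟨y, hy2, hyM⟩ : ∃ y, y ∈ F2 ∧ y ∉ M := by
      by_contra h; push_neg at h
      exact hne2 (Set.Subset.antisymm hsub2 h)
    -- c ∈ ⟨M ∪ {x}⟩
    have key : ∀ z : H, z ∉ M → imp z c ∈ M := by
      intro z hzM
      by_contra hzc
      have hD : gf imp M [z] ∈ S := by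
        refine ⟨gf_filter hH hMf [z], hFM'.trans (subset_gf hH hMf [z]), ?_⟩
        intro hcD
        exact hzc hcD
      have := hM.eq_of_subset hD (subset_gf hH hMf [z])
      exact hzM (this ▸ mem_gf_of_mem hH hMf (List.mem_singleton.mpr rfl))
    have hc1 : c ∈ F1 := h1.2 x c hx1 (hsub1 (key x hxM))
    have hc2 : c ∈ F2 := h2.2 y c hy2 (hsub2 (key y hyM))
    refine hcM ?_
    rw [heq]
    exact ⟨hc1, hc2⟩


theorem zero_notin_irr {zero : H} (hbot : ∀ a : H, imp zero a = one)
    {P : Set H} (hP : Irr imp one P) : zero ∉ P := fun hz =>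
  hP.2.1 (eq_univ_of_zero_mem hbot hP.1 hz)

/-- Irreducibility characterization: for `a, b ∉ P` there is `c ∉ P` with
`a→c ∈ P` and `b→c ∈ P`. -/
theorem irr_char (hH : IsH imp one) {P : Set H} (hP : Irr imp one P) {a b : H}
    (ha : a ∉ P) (hb : b ∉ P) :
    ∃ c : H, c ∉ P ∧ imp a c ∈ P ∧ imp b c ∈ P := by
  set F1 : Set H := {x | imp a x ∈ P} with hF1
  set F2 : Set H := {x | imp b x ∈ P} with hF2
  have hf1 : IsF imp one F1 := by
    constructor
    · exact thm_mem hP.1 (htop hH a)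
    · intro x y hx hxy
      exact hP.1.2 _ _ hx (mem_of_le hP.1 hxy (hH.2.1 a x y))
  have hf2 : IsF imp one F2 := by
    constructor
    · exact thm_mem hP.1 (htop hH b)
    · intro x y hx hxy
      exact hP.1.2 _ _ hx (mem_of_le hP.1 hxy (hH.2.1 b x y))
  have hsub : P ⊆ F1 ∩ F2 := fun x hx =>
    ⟨mem_of_le hP.1 hx (hH.1 x a), mem_of_le hP.1 hx (hH.1 x b)⟩
  have hne : P ≠ F1 ∩ F2 := by
    intro h
    rcases hP.2.2 F1 F2 hf1 hf2 h with h1 | h1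
    · exact ha (h1 ▸ (show a ∈ F1 from thm_mem hP.1 (hid hH a)) : a ∈ P)
    · exact hb (h1 ▸ (show b ∈ F2 from thm_mem hP.1 (hid hH b)) : b ∈ P)
  obtain ⟨c, hc12, hcP⟩ : ∃ c, c ∈ F1 ∩ F2 ∧ c ∉ P := by
    by_contra h; push_neg at h
    exact hne (Set.Subset.antisymm hsub h)
  exact ⟨c, hcP, hc12.1, hc12.2⟩

/-- Disjunction property from the frontal axiom (iii):
if `g a ∈ P` and `P` is irreducible then `b ∈ P` or `b→a ∈ P`. -/
theorem frontal_disj (hH : IsH imp one) {g : H → H}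
    (hf3 : ∀ a b : H, imp (g a) (imp (imp (imp b a) b) b) = one)
    {P : Set H} (hP : Irr imp one P) {a : H} (hga : g a ∈ P) (b : H) :
    b ∈ P ∨ imp b a ∈ P := by
  by_contra hcon
  push_neg at hcon
  obtain ⟨hb, hba⟩ := hcon
  obtain ⟨c, hcP, hbc, hbac⟩ := irr_char hH hP hb hba
  have h1 : imp (imp (imp c a) c) c ∈ P := mem_of_le hP.1 hga (hf3 a c)
  have h2 : imp (imp c a) c ∈ P := by
    have t := tthm hH a b c
    have := mem_of_le hP.1 hbc t
    exact hP.1.2 _ _ hbac this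
  exact hcP (hP.1.2 _ _ h2 h1)

/-- L*: if `g a ∈ P`, `P ⊆ Q` irreducible, `a ∉ Q` then `P = Q`. -/
theorem lstar (hH : IsH imp one) {g : H → H}
    (hf3 : ∀ a b : H, imp (g a) (imp (imp (imp b a) b) b) = one)
    {P Q : Set H} (hP : Irr imp one P) (hQ : Irr imp one Q) (hPQ : P ⊆ Q)
    {a : H} (hga : g a ∈ P) (haQ : a ∉ Q) : P = Q := by
  refine Set.Subset.antisymm hPQ fun b hb => ?_
  rcases frontal_disj hH hf3 hP hga b with h | h
  · exact h
  · exact absurd (hQ.1.2 _ _ hb (hPQ h)) haQ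

theorem chain_list {ch : Set (Set H)} (hchain : IsChain (· ⊆ ·) ch)
    (hne : ch.Nonempty) :
    ∀ l : List H, (∀ a ∈ l, ∃ G ∈ ch, a ∈ G) → ∃ G ∈ ch, ∀ a ∈ l, a ∈ G := by
  intro l
  induction l with
  | nil => intro _; obtain ⟨G, hG⟩ := hne; exact ⟨G, hG, by simp⟩
  | cons hd t ih =>
      intro h
      obtain ⟨G1, hG1, hhd⟩ := h hd List.mem_cons_self
      obtain ⟨G2, hG2, ht⟩ := ih fun a hal => h a (List.mem_cons_of_mem hd hal)
      rcases hchain.total hG1 hG2 with hsub | hsub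
      · exact ⟨G2, hG2, fun a hal => by
          rcases List.mem_cons.mp hal with rfl | hat
          · exact hsub hhd
          · exact ht a hat⟩
      · exact ⟨G1, hG1, fun a hal => by
          rcases List.mem_cons.mp hal with rfl | hat
          · exact hhd
          · exact hsub (ht a hat)⟩

/-- Zorn: extension of an irreducible filter missing some member of `l`
to one maximal with this property (among all filters). -/
theorem maxext (hH : IsH imp one) {Q : Set H} (hQ : IsF imp one Q)
    {l : List H} (hmiss : ∃ a ∈ l, a ∉ Q) :
    ∃ M : Set H, Irr imp one M ∧ Q ⊆ M ∧ (∃ a ∈ l, a ∉ M) ∧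
      ∀ R : Set H, IsF imp one R → M ⊆ R → (∃ a ∈ l, a ∉ R) → R = M := by
  set S : Set (Set H) := {G | IsF imp one G ∧ Q ⊆ G ∧ ∃ a ∈ l, a ∉ G} with hS
  have Hub : ∀ ch ⊆ S, IsChain (· ⊆ ·) ch → ch.Nonempty →
      ∃ ub ∈ S, ∀ s ∈ ch, s ⊆ ub := by
    intro ch hch hchain hne
    have hmiss' : ∃ a ∈ l, ∀ G ∈ ch, a ∉ G := by
      by_contra h; push_neg at h
      obtain ⟨G, hGc, hGall⟩ := chain_list hchain hne l h
      obtain ⟨a, hal, haG⟩ := (hch hGc).2.2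
      exact haG (hGall a hal)
    obtain ⟨a, hal, haG⟩ := hmiss'
    refine ⟨⋃₀ ch, ⟨sUnion_chain_filter hH hchain hne fun G hG => (hch hG).1, ?_,
      ⟨a, hal, ?_⟩⟩, fun s hs => Set.subset_sUnion_of_mem hs⟩
    · obtain ⟨G, hG⟩ := hne
      exact ((hch hG).2.1).trans (Set.subset_sUnion_of_mem hG)
    · rintro ⟨G, hG, haG'⟩
      exact haG G hG haG'
  obtain ⟨M, hQM, hM⟩ := zorn_subset_nonempty S Hub Q ⟨hQ, subset_rfl, hmiss⟩
  obtain ⟨hMf, hQM', hmissM⟩ := hM.prop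
  have hmax : ∀ R : Set H, IsF imp one R → M ⊆ R → (∃ a ∈ l, a ∉ R) → R = M := by
    intro R hR hMR hmissR
    exact hM.eq_of_subset ⟨hR, hQM'.trans hMR, hmissR⟩ hMR |>.symm
  refine ⟨M, ⟨hMf, ?_, ?_⟩, hQM, hmissM, hmax⟩
  · intro h
    obtain ⟨a, _, haM⟩ := hmissM
    exact haM (h ▸ Set.mem_univ a)
  · intro F1 F2 h1 h2 heq
    have hsub1 : M ⊆ F1 := heq ▸ Set.inter_subset_left
    have hsub2 : M ⊆ F2 := heq ▸ Set.inter_subset_right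
    by_contra hcon
    push_neg at hcon
    obtain ⟨hne1, hne2⟩ := hcon
    have hl1 : ∀ a ∈ l, a ∈ F1 := by
      by_contra h; push_neg at h
      exact hne1 ((hmax F1 h1 hsub1 h).symm)
    have hl2 : ∀ a ∈ l, a ∈ F2 := by
      by_contra h; push_neg at h
      exact hne2 ((hmax F2 h2 hsub2 h).symm)
    obtain ⟨a, hal, haM⟩ := hmissM
    refine haM ?_
    rw [heq]
    exact ⟨hl1 a hal, hl2 a hal⟩


/-! ### The `g`-preimage filter -/

theorem gpre_filter (hH : IsH imp one) {g : H → H}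
    (hf1 : ∀ a b : H, imp (g (imp a b)) (imp (g a) (g b)) = one)
    (hf2 : ∀ a : H, imp a (g a) = one)
    {P : Set H} (hP : IsF imp one P) : IsF imp one (g ⁻¹' P) := by
  constructor
  · exact hP.2 one (g one) hP.1 (thm_mem hP (hf2 one))
  · intro a b ha hab
    exact hP.2 _ _ ha (mem_of_le hP hab (hf1 a b))

theorem subset_gpre {g : H → H} (hf2 : ∀ a : H, imp a (g a) = one)
    {P : Set H} (hP : IsF imp one P) : P ⊆ g ⁻¹' P := fun a ha =>
  mem_of_le hP ha (hf2 a)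

/-! ### Double-negation chain lemma -/

theorem nn_chain (hH : IsH imp one) (zero : H)
    (hbot : ∀ a : H, imp zero a = one) {Q : Set H} (hQ : IsF imp one Q) :
    ∀ l : List H, (∀ a ∈ l, imp (imp a zero) zero ∈ Q) →
      imp (imp (List.foldr imp zero l) zero) zero ∈ Q → zero ∈ Q := by
  intro l
  induction l with
  | nil =>
      intro _ h
      simp only [List.foldr_nil] at h
      rw [hbot zero, one_imp hH] at h
      exact h
  | cons hd t ih =>
      intro hall h
      have h1 : imp (imp (imp hd zero) zero)
          (imp (imp (List.foldr imp zero t) zero) zero) ∈ Q :=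
        mem_of_le hQ h (dn_imp hH zero hd (List.foldr imp zero t))
      have h2 := hQ.2 _ _ (hall hd List.mem_cons_self) h1
      exact ih (fun a ha => hall a (List.mem_cons_of_mem hd ha)) h2

end Stmt19Aux


/-- For a bounded Hilbert algebra `(H, G)` with a Gabbay function, on the
implicative semilattice `L(H)` of finite intersections of sets `φ(a)` the
extension `G^π` satisfies `G^π(U) = U ∪ (¬¬U ∩ (Uᶜ)_M)` and is a Gabbay
function: `G^π(U) ⊆ ¬¬U` and `G^π(U) ⇒ U ⊆ ¬¬U ⇒ U`. -/
theorem stmt_19 {H : Type*} (imp : H → H → H) (one zero : H)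
    (hH : FH.IsHilbert imp one) (hbot : ∀ a : H, imp zero a = one)
    (g : H → H) (hf : FH.IsFrontal imp one g)
    (hG4 : ∀ a : H, FH.hle imp one (g a) (imp (imp a zero) zero))
    (hG5 : ∀ a : H, FH.hle imp one (imp (g a) a)
      (imp (imp (imp a zero) zero) a)) :
    ∀ U, FH.gen imp one U →
      (FH.tpi imp one g U =
        U ∪ (FH.himp imp one (FH.himp imp one U ∅) ∅ ∩ FH.Mx (FH.Xc imp one U))) ∧
      (FH.tpi imp one g U ⊆ FH.himp imp one (FH.himp imp one U ∅) ∅) ∧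
      (FH.himp imp one (FH.tpi imp one g U) U ⊆
        FH.himp imp one (FH.himp imp one (FH.himp imp one U ∅) ∅) U) := by
  classical
  open Stmt19Aux in
  intro U hU
  obtain ⟨l, hlne, hUdef⟩ := hU
  subst hUdef
  have hH' : Stmt19Aux.IsH imp one := hH
  have hf1 : ∀ a b : H, imp (g (imp a b)) (imp (g a) (g b)) = one := hf.1
  have hf2 : ∀ a : H, imp a (g a) = one := hf.2.1
  have hf3 : ∀ a b : H, imp (g a) (imp (imp (imp b a) b) b) = one := hf.2.2
  set U : Set (Set H) := {P | FH.IsIrr imp one P ∧ ∀ a ∈ l, a ∈ P} with hUdef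
  have hIrr : ∀ P : Set H, FH.IsIrr imp one P ↔ Stmt19Aux.Irr imp one P := fun P => Iff.rfl
  -- characterization of tpi
  have tpi_char : ∀ P : Set H, P ∈ FH.tpi imp one g U ↔
      (Stmt19Aux.Irr imp one P ∧ ∀ a ∈ l, g a ∈ P) := by
    intro P
    constructor
    · rintro ⟨hPirr, hP2⟩
      refine ⟨hPirr, fun a hal => ?_⟩
      by_contra hga
      have hgp : Stmt19Aux.IsF imp one (g ⁻¹' P) :=
        gpre_filter hH' hf1 hf2 (hIrr P |>.mp hPirr).1
      obtain ⟨Q, hQirr, hsub, haQ⟩ := separation hH' hgp (show a ∉ g ⁻¹' P from hga)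
      exact haQ ((hP2 Q hQirr hsub).2 a hal)
    · rintro ⟨hPirr, hg⟩
      exact ⟨hPirr, fun Q hQirr hsub => ⟨hQirr, fun a hal => hsub (hg a hal)⟩⟩
  -- ¬¬U
  set nnU : Set (Set H) := FH.himp imp one (FH.himp imp one U ∅) ∅ with hnnU
  have nnU_in : ∀ P : Set H, Stmt19Aux.Irr imp one P →
      (∀ a ∈ l, imp (imp a zero) zero ∈ P) → P ∈ nnU := by
    intro P hPirr hnn
    refine ⟨hPirr, fun Q hQirr hPQ hQn => ?_⟩
    exfalso
    by_cases hz : zero ∈ gf imp Q l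
    · have hw : imp (imp (List.foldr imp zero l) zero) zero ∈ Q :=
        mem_of_le hQirr.1 hz (pe hH' (List.foldr imp zero l) zero)
      have hzQ : zero ∈ Q :=
        nn_chain hH' zero hbot hQirr.1 l (fun a ha => hPQ (hnn a ha)) hw
      exact zero_notin_irr hbot hQirr hzQ
    · obtain ⟨R, hRirr, hDR, _⟩ := separation hH' (gf_filter hH' hQirr.1 l) hz
      have hRU : R ∈ U := ⟨hRirr, fun a ha => hDR (mem_gf_of_mem hH' hQirr.1 ha)⟩
      exact Set.notMem_empty R
        (hQn.2 R hRirr ((subset_gf hH' hQirr.1 l).trans hDR) hRU)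
  have nnU_out : ∀ P : Set H, P ∈ nnU → ∀ a ∈ l, imp (imp a zero) zero ∈ P := by
    rintro P ⟨hPirr, hP2⟩ a hal
    by_contra hnn
    have hz : zero ∉ gf imp P [imp a zero] := hnn
    obtain ⟨Q, hQirr, hDQ, _⟩ :=
      separation hH' (gf_filter hH' (hIrr P |>.mp hPirr).1 [imp a zero]) hz
    have hPQ : P ⊆ Q := (subset_gf hH' (hIrr P |>.mp hPirr).1 [imp a zero]).trans hDQ
    have hnot : Q ∉ FH.himp imp one U ∅ := fun hmem => hP2 Q hQirr hPQ hmem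
    have hex : ∃ R : Set H, FH.IsIrr imp one R ∧ Q ⊆ R ∧ R ∈ U := by
      by_contra h
      push_neg at h
      exact hnot ⟨hQirr, fun R hR hQR hRU => absurd hRU (h R hR hQR)⟩
    obtain ⟨R, hRirr, hQR, hRU⟩ := hex
    have haR : a ∈ R := hRU.2 a hal
    have hnaR : imp a zero ∈ R :=
      hQR (hDQ (mem_gf_of_mem hH' (hIrr P |>.mp hPirr).1 (List.mem_singleton.mpr rfl)))
    exact zero_notin_irr hbot hRirr ((hIrr R |>.mp hRirr).1.2 a zero haR hnaR)
  -- Goal 2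
  have goal2 : FH.tpi imp one g U ⊆ nnU := by
    intro P hP
    obtain ⟨hPirr, hg⟩ := (tpi_char P).mp hP
    exact nnU_in P hPirr fun a hal => mem_of_le hPirr.1 (hg a hal) (hG4 a)
  -- U ⊆ tpi U
  have sub1 : U ⊆ FH.tpi imp one g U := by
    rintro P ⟨hPirr, hl⟩
    exact (tpi_char P).mpr ⟨hPirr, fun a hal =>
      mem_of_le (hIrr P |>.mp hPirr).1 (hl a hal) (hf2 a)⟩
  -- nnU ∩ Mx (Xc U) ⊆ tpi U
  have sub2 : nnU ∩ FH.Mx (FH.Xc imp one U) ⊆ FH.tpi imp one g U := by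
    rintro P ⟨hPnn, ⟨⟨hPirr, hPU⟩, hPmax⟩⟩
    have hnn := nnU_out P hPnn
    refine (tpi_char P).mpr ⟨hPirr, fun a hal => ?_⟩
    by_contra hga
    by_cases hcase : imp (g a) a ∈ P
    · have h1 : imp (imp (imp a zero) zero) a ∈ P :=
        mem_of_le (hIrr P |>.mp hPirr).1 hcase (hG5 a)
      have h2 : a ∈ P := (hIrr P |>.mp hPirr).1.2 _ a (hnn a hal) h1
      exact hga (mem_of_le (hIrr P |>.mp hPirr).1 h2 (hf2 a))
    · have haD : a ∉ gf imp P [g a] := hcase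
      obtain ⟨R, hRirr, hDR, haR⟩ :=
        separation hH' (gf_filter hH' (hIrr P |>.mp hPirr).1 [g a]) haD
      have hPR : P ⊆ R := (subset_gf hH' (hIrr P |>.mp hPirr).1 [g a]).trans hDR
      have hRU : R ∉ U := fun hmem => haR (hmem.2 a hal)
      have hPeqR : P = R := hPmax R ⟨hRirr, hRU⟩ hPR
      exact hga (hPeqR ▸ hDR (mem_gf_of_mem hH' (hIrr P |>.mp hPirr).1
        (List.mem_singleton.mpr rfl)))
  -- tpi U ⊆ U ∪ (nnU ∩ Mx (Xc U))
  have sub3 : FH.tpi imp one g U ⊆ U ∪ (nnU ∩ FH.Mx (FH.Xc imp one U)) := by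
    intro P hP
    obtain ⟨hPirr, hg⟩ := (tpi_char P).mp hP
    by_cases hPU : P ∈ U
    · exact Or.inl hPU
    · refine Or.inr ⟨goal2 hP, ⟨⟨hPirr, hPU⟩, ?_⟩⟩
      rintro Q ⟨hQirr, hQU⟩ hPQ
      have hex : ∃ a ∈ l, a ∉ Q := by
        by_contra h
        push_neg at h
        exact hQU ⟨hQirr, h⟩
      obtain ⟨a, hal, haQ⟩ := hex
      exact lstar hH' hf3 hPirr hQirr hPQ (hg a hal) haQ
  refine ⟨Set.Subset.antisymm sub3 ?_, goal2, ?_⟩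
  · rintro P (hP | hP)
    · exact sub1 hP
    · exact sub2 hP
  -- Goal 3
  · rintro P ⟨hPirr, hP2⟩
    refine ⟨hPirr, fun Q hQirr hPQ hQnn => ?_⟩
    by_contra hQU
    have hex : ∃ a ∈ l, a ∉ Q := by
      by_contra h
      push_neg at h
      exact hQU ⟨hQirr, h⟩
    obtain ⟨M, hMirr, hQM, hmissM, hmax⟩ := maxext hH' (hIrr Q |>.mp hQirr).1 hex
    have hMnn : M ∈ nnU :=
      ⟨hMirr, fun R hR hMR hRn => hQnn.2 R hR (hQM.trans hMR) hRn⟩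
    have hMU : M ∉ U := by
      rintro ⟨_, hall⟩
      obtain ⟨a, hal, haM⟩ := hmissM
      exact haM (hall a hal)
    have hMmx : M ∈ FH.Mx (FH.Xc imp one U) := by
      refine ⟨⟨hMirr, hMU⟩, ?_⟩
      rintro R ⟨hRirr, hRU⟩ hMR
      have hexR : ∃ a ∈ l, a ∉ R := by
        by_contra h
        push_neg at h
        exact hRU ⟨hRirr, h⟩
      exact (hmax R (hIrr R |>.mp hRirr).1 hMR hexR).symm
    have hMtpi : M ∈ FH.tpi imp one g U := sub2 ⟨hMnn, hMmx⟩
    have hMU' : M ∈ U := hP2 M hMirr (hPQ.trans hQM) hMtpi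
    exact hMU hMU'
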